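/- For n > 0 and ω ∈ ℂ with −2n < Im(ω) < 0, the generalized Fourier transform (1/2π)∫_ℝ Hₙ(x) e^{−iωx} dx of Hₙ(x) = (1 + tanh(nx))/2 equals Ĥₙ(ω) = (−i/(4n)) csch(πω/(2n)). -/

import Mathlib

open MeasureTheory Set Complex

lemma img_eq : (fun t : ℝ => t / (1 + t)) '' Ioi 0 = Ioo 0 1 := by
  ext y
  constructor
  · rintro ⟨t, ht, rfl⟩
    have ht' : (0:ℝ) < t := ht
    have h1 : (0:ℝ) < 1 + t := by linarith
    constructor
    · positivity
    · rw [div_lt_one h1]; linarith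
  · rintro ⟨hy0, hy1⟩
    refine ⟨y / (1 - y), ?_, ?_⟩
    · have : (0:ℝ) < 1 - y := by linarith
      exact div_pos hy0 this
    · have h1 : (1:ℝ) - y ≠ 0 := by linarith
      field_simp
      ring

lemma aux1 (a : ℂ) (ha1 : -1 < a.re) (ha2 : a.re < 0) :
    ∫ t in Ioi (0:ℝ), (t:ℂ) ^ a / (1 + (t:ℂ)) = ↑Real.pi / Complex.sin (Real.pi * (a + 1)) := by
  have hu : 0 < (a + 1).re := by simp; linarith
  have hv : 0 < (-a).re := by simp; linarith
  -- beta value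
  have hbeta : Complex.betaIntegral (a + 1) (-a) = ↑Real.pi / Complex.sin (Real.pi * (a + 1)) := by
    have h := Complex.Gamma_mul_Gamma_eq_betaIntegral hu hv
    rw [show a + 1 + -a = 1 by ring, Complex.Gamma_one, one_mul] at h
    rw [← h, ← Complex.Gamma_mul_Gamma_one_sub (a + 1)]
    congr 1
    ring
  rw [← hbeta, Complex.betaIntegral]
  rw [intervalIntegral.integral_of_le zero_le_one, MeasureTheory.integral_Ioc_eq_integral_Ioo]
  -- change of variables x = t/(1+t)
  have hderiv : ∀ t ∈ Ioi (0:ℝ), HasDerivWithinAt (fun t : ℝ => t / (1 + t))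
      (((1 + t) ^ 2)⁻¹) (Ioi 0) t := by
    intro t ht
    have h1 : (1:ℝ) + t ≠ 0 := by have : (0:ℝ) < t := ht; positivity
    have := (hasDerivAt_id t).div ((hasDerivAt_id t).const_add 1) h1
    simp only [id_eq, one_mul, mul_one] at this
    convert this.hasDerivWithinAt using 1
    · rfl
    · rfl
    · rfl
    · ring
  have hinj : InjOn (fun t : ℝ => t / (1 + t)) (Ioi 0) := by
    intro s hs t ht h
    have hs' : (0:ℝ) < s := hs
    have ht' : (0:ℝ) < t := ht
    have h1 : (1:ℝ) + s ≠ 0 := by positivity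
    have h2 : (1:ℝ) + t ≠ 0 := by positivity
    field_simp at h
    linarith
  rw [← img_eq,
    integral_image_eq_integral_abs_deriv_smul (measurableSet_Ioi (a := (0:ℝ))) hderiv hinj]
  apply setIntegral_congr_fun (measurableSet_Ioi)
  intro t ht
  have ht' : (0:ℝ) < t := ht
  have hp : (0:ℝ) < 1 + t := by linarith
  have hpne : ((1:ℝ) + t : ℂ) ≠ 0 := by
    simp only [← Complex.ofReal_one, ← Complex.ofReal_add, ne_eq, Complex.ofReal_eq_zero]
    linarith
  have ht0 : (0:ℝ) ≤ t := ht'.le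
  have hpinv : (0:ℝ) ≤ (1 + t)⁻¹ := by positivity
  have harg : ((1 + t : ℝ) : ℂ).arg ≠ Real.pi := by
    rw [Complex.arg_ofReal_of_nonneg hp.le]
    exact Real.pi_ne_zero.symm
  set P : ℂ := ((1 + t : ℝ) : ℂ) with hP
  have e1 : ((t / (1 + t) : ℝ) : ℂ) ^ (a + 1 - 1) = (t : ℂ) ^ a * P ^ (-a) := by
    rw [show a + 1 - 1 = a by ring, div_eq_mul_inv, Complex.ofReal_mul,
      Complex.mul_cpow_ofReal_nonneg ht0 hpinv, Complex.ofReal_inv,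
      Complex.inv_cpow _ _ harg, ← Complex.cpow_neg]
  have e2 : ((1 : ℂ) - ((t / (1 + t) : ℝ) : ℂ)) ^ (-a - 1) = P ^ (a + 1) := by
    have : (1 : ℂ) - ((t / (1 + t) : ℝ) : ℂ) = P⁻¹ := by
      rw [hP]
      have hpne' : (1 + t : ℝ) ≠ 0 := hp.ne'
      push_cast
      have hne : (1:ℂ) + t ≠ 0 := by exact_mod_cast Complex.ofReal_ne_zero.mpr hpne'
      rw [eq_comm, inv_eq_one_div, div_eq_iff hne, sub_mul, div_mul_cancel₀ _ hne]
      ring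
    rw [this, Complex.inv_cpow _ _ harg, ← Complex.cpow_neg,
      show -(-a - 1) = a + 1 by ring]
  have hPne : P ≠ 0 := by
    rw [hP]
    exact_mod_cast hp.ne'
  simp only [e1, e2, Function.comp_apply, Complex.real_smul]
  rw [abs_of_pos (by positivity : (0:ℝ) < ((1 + t) ^ 2)⁻¹),
    mul_assoc, ← Complex.cpow_add _ _ hPne, show -a + (a + 1) = 1 by ring, Complex.cpow_one, hP]
  push_cast
  have h2 : ((1:ℂ) + t) ≠ 0 := by exact_mod_cast hpne
  field_simp

/-- For `n > 0` and `ω ∈ ℂ` with `−2n < Im ω < 0`, the generalized Fourier transform of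
`Hₙ(x) = (1 + tanh(nx))/2` equals `(−i/(4n)) csch(πω/(2n))`. -/
theorem stmt_7 (n : ℝ) (hn : 0 < n) (ω : ℂ) (h1 : -2 * n < ω.im) (h2 : ω.im < 0) :
    (1 / (2 * (Real.pi : ℂ))) *
        ∫ x : ℝ, (((1 + Real.tanh (n * x)) / 2 : ℝ) : ℂ) * Complex.exp (-(Complex.I * ω * (x : ℂ)))
      = (-Complex.I / (4 * (n : ℂ))) * (Complex.sinh ((Real.pi : ℂ) * ω / (2 * (n : ℂ))))⁻¹ := by
  have hn2 : (0:ℝ) < 2 * n := by linarith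
  have hn2c : ((2 * n : ℝ) : ℂ) ≠ 0 := by exact_mod_cast hn2.ne'
  have hnc : (n : ℂ) ≠ 0 := by exact_mod_cast hn.ne'
  set a : ℂ := -(Complex.I * ω) / ((2 * n : ℝ) : ℂ) with ha
  have hare : a.re = ω.im / (2 * n) := by
    rw [ha, Complex.div_ofReal_re]
    simp
  have ha1 : -1 < a.re := by
    rw [hare, lt_div_iff₀ hn2]
    linarith
  have ha2 : a.re < 0 := by rw [hare]; exact div_neg_of_neg_of_pos h2 hn2
  -- change of variables t = exp(2 n x)
  have himg : (fun x : ℝ => Real.exp (2 * n * x)) '' univ = Ioi 0 := by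
    rw [image_univ]
    ext y
    constructor
    · rintro ⟨x, rfl⟩; exact Real.exp_pos _
    · intro hy
      refine ⟨Real.log y / (2 * n), ?_⟩
      dsimp only
      rw [mul_div_cancel₀ _ hn2.ne', Real.exp_log hy]
  have hderiv : ∀ x ∈ (univ : Set ℝ), HasDerivWithinAt (fun x : ℝ => Real.exp (2 * n * x))
      (Real.exp (2 * n * x) * (2 * n)) univ x := by
    intro x _
    have h0 : HasDerivAt (fun x : ℝ => 2 * n * x) (2 * n) x := by
      simpa using (hasDerivAt_id x).const_mul (2 * n)
    exact h0.exp.hasDerivWithinAt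
  have hinj : InjOn (fun x : ℝ => Real.exp (2 * n * x)) univ := by
    intro x _ y _ h
    have := Real.exp_injective h
    exact mul_left_cancel₀ hn2.ne' this
  have key := integral_image_eq_integral_abs_deriv_smul (MeasurableSet.univ)
    hderiv hinj (fun t : ℝ => (((2 * n : ℝ) : ℂ))⁻¹ * ((t:ℂ) ^ a / (1 + (t:ℂ))))
  rw [himg, setIntegral_univ] at key
  have hpt : ∀ x : ℝ, |Real.exp (2 * n * x) * (2 * n)| •
      ((((2 * n : ℝ) : ℂ))⁻¹ * ((((Real.exp (2 * n * x) : ℝ)):ℂ) ^ a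
        / (1 + ((Real.exp (2 * n * x) : ℝ):ℂ))))
      = (((1 + Real.tanh (n * x)) / 2 : ℝ) : ℂ) * Complex.exp (-(Complex.I * ω * (x : ℂ))) := by
    intro x
    set e : ℝ := Real.exp (2 * n * x) with he
    have hepos : 0 < e := Real.exp_pos _
    have c2 : ((e : ℝ) : ℂ) ^ a = Complex.exp (-(Complex.I * ω * (x : ℂ))) := by
      rw [he, Complex.ofReal_exp, Complex.cpow_def_of_ne_zero (Complex.exp_ne_zero _),
        Complex.log_exp (by rw [Complex.ofReal_im]; linarith [Real.pi_pos])
          (by rw [Complex.ofReal_im]; linarith [Real.pi_pos])]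
      congr 1
      rw [ha]
      push_cast
      field_simp
    have c1 : ((1 + Real.tanh (n * x)) / 2 : ℝ) = e / (1 + e) := by
      rw [Real.tanh_eq_sinh_div_cosh, Real.sinh_eq, Real.cosh_eq, he]
      have h3 : Real.exp (2 * n * x) = Real.exp (n * x) * Real.exp (n * x) := by
        rw [← Real.exp_add]; ring_nf
      have h4 : Real.exp (-(n * x)) = (Real.exp (n * x))⁻¹ := Real.exp_neg _
      have h5 : (0:ℝ) < Real.exp (n * x) := Real.exp_pos _
      have h6 : (0:ℝ) < 1 + Real.exp (2 * n * x) := by positivity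
      rw [h3, h4]
      field_simp
      ring
    rw [c1, ← c2]
    rw [abs_of_pos (by positivity : (0:ℝ) < e * (2 * n)), Complex.real_smul]
    have hec : ((1:ℂ) + (e:ℂ)) ≠ 0 := by
      rw [show ((1:ℂ) + (e:ℂ)) = ((1 + e : ℝ) : ℂ) by push_cast; ring]
      exact_mod_cast (by positivity : (0:ℝ) < 1 + e).ne'
    push_cast
    field_simp
  simp_rw [hpt] at key
  rw [← key, integral_const_mul, aux1 a ha1 ha2]
  have hsin : Complex.sin (Real.pi * (a + 1)) =
      Complex.sinh ((Real.pi : ℂ) * ω / (2 * (n : ℂ))) * Complex.I := by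
    rw [show ((Real.pi : ℂ)) * (a + 1) = ↑Real.pi * a + ↑Real.pi by ring, Complex.sin_add_pi,
      show ((Real.pi : ℂ)) * a = -(((Real.pi : ℂ) * ω / (2 * (n : ℂ))) * Complex.I) by
        rw [ha]; push_cast; field_simp,
      Complex.sin_neg, Complex.sin_mul_I, neg_neg]
  have hπ : ((Real.pi : ℝ) : ℂ) ≠ 0 := by exact_mod_cast Real.pi_ne_zero
  have hIS : ((Real.pi : ℝ) : ℂ) / (Complex.sinh ((Real.pi : ℂ) * ω / (2 * (n : ℂ))) * Complex.I)
      = (Real.pi : ℂ) * (-Complex.I *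
        (Complex.sinh ((Real.pi : ℂ) * ω / (2 * (n : ℂ))))⁻¹) := by
    rw [div_eq_mul_inv, mul_inv, Complex.inv_I]
    ring
  rw [hsin, hIS]
  push_cast
  linear_combination (-(Complex.I) * (Complex.sinh ((Real.pi : ℂ) * ω / (2 * (n : ℂ))))⁻¹
    / (4 * (n : ℂ))) * mul_inv_cancel₀ hπ
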